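/- The Barker matrix 𝓑^{(p)}_{(𝒥)} := I − ω^{−1} A^{(p;ω)}_{(𝒥)} does not depend on ω ≠ 0 (it equals I − A^{(p;1)}_{(𝒥)}), belongs to ⟨p⟩^+, and its entries in row n satisfy (𝓑^{(p)}_{(𝒥)})_{n, j_u} = r_{j_u}/(1 + r_{(𝒥)}1_d) for each u ∈ {1,…,d} and (𝓑^{(p)}_{(𝒥)})_{n,n} = 1/(1 + r_{(𝒥)}1_d). -/

import Mathlib

open Matrix

/-- The ratio `r_j := p_j / p_n` for `j ∈ [n-1]`, with the state space `[n]` modeled as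
`Fin (m+1)`, the last state `n` as `Fin.last m`, and `[n-1]` as `Fin m` via `Fin.castSucc`. -/
noncomputable def r (m : ℕ) (p : Fin (m + 1) → ℝ) (j : Fin m) : ℝ :=
  p j.castSucc / p (Fin.last m)

/-- `e^{(p)}_{(j,k)} := (e_j − r_j e_n)(e_k^T − e_n^T)` as an `(m+1) × (m+1)` real matrix. -/
noncomputable def Ep (m : ℕ) (p : Fin (m + 1) → ℝ) (j k : Fin m) :
    Matrix (Fin (m + 1)) (Fin (m + 1)) ℝ :=
  Matrix.vecMulVec
    (fun a => (if a = j.castSucc then (1 : ℝ) else 0) -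
      r m p j * (if a = Fin.last m then (1 : ℝ) else 0))
    (fun b => (if b = k.castSucc then (1 : ℝ) else 0) - (if b = Fin.last m then (1 : ℝ) else 0))

/-- For a `d`-element subset `𝒥 = {j_1, …, j_d} ⊆ [n-1]` (given as an injective tuple
`J : Fin d → Fin m`) and a `d × d` matrix `μ`, the `n × n` matrix
`μ^{(p)}_{(𝒥)} := Σ_{u,v} μ_{uv} e^{(p)}_{(j_u, j_v)}`. -/
noncomputable def liftJ (m d : ℕ) (p : Fin (m + 1) → ℝ) (J : Fin d → Fin m)
    (μ : Matrix (Fin d) (Fin d) ℝ) : Matrix (Fin (m + 1)) (Fin (m + 1)) ℝ :=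
  ∑ u, ∑ v, μ u v • Ep m p (J u) (J v)

/-- The matrix `A^{(p;ω)}_{(𝒥)} := ω Σ_{u,v} (δ_{j_u j_v} − r_{j_v}/(1 + r_{(𝒥)} 1_d))
e^{(p)}_{(j_u, j_v)}`. -/
noncomputable def AJ (m d : ℕ) (p : Fin (m + 1) → ℝ) (J : Fin d → Fin m) (ω : ℝ) :
    Matrix (Fin (m + 1)) (Fin (m + 1)) ℝ :=
  ω • ∑ u, ∑ v,
    ((if J u = J v then (1 : ℝ) else 0) - r m p (J v) / (1 + ∑ w, r m p (J w))) •
      Ep m p (J u) (J v)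

lemma hA_apply (m d : ℕ) (p : Fin (m + 1) → ℝ) (J : Fin d → Fin m)
    (a b : Fin (m + 1)) :
    AJ m d p J 1 a b = ∑ u, ∑ v,
      ((if J u = J v then (1 : ℝ) else 0) - r m p (J v) / (1 + ∑ w, r m p (J w))) *
        (((if a = (J u).castSucc then (1 : ℝ) else 0) -
            r m p (J u) * (if a = Fin.last m then (1 : ℝ) else 0)) *
          ((if b = (J v).castSucc then (1 : ℝ) else 0) -
            (if b = Fin.last m then (1 : ℝ) else 0))) := by
  simp [AJ, Ep, Matrix.sum_apply, Matrix.vecMulVec_apply, mul_assoc]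

/-- the Barker matrix `𝓑^{(p)}_{(𝒥)} = I − ω⁻¹ A^{(p;ω)}_{(𝒥)}` does not
depend on `ω ≠ 0` (it equals `I − A^{(p;1)}_{(𝒥)}`), lies in `⟨p⟩⁺`, and its row-`n`
entries are `(𝓑)_{n j_u} = r_{j_u}/(1 + r_{(𝒥)} 1_d)` and `(𝓑)_{nn} = 1/(1 + r_{(𝒥)} 1_d)`. -/
theorem stmt16 (m d : ℕ) (hm : 1 ≤ m) (hd : 1 ≤ d) (p : Fin (m + 1) → ℝ)
    (hp : ∀ a, 0 < p a) (hsum : ∑ a, p a = 1)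
    (J : Fin d → Fin m) (hJ : Function.Injective J) :
    (∀ ω : ℝ, ω ≠ 0 →
      (1 : Matrix (Fin (m + 1)) (Fin (m + 1)) ℝ) - ω⁻¹ • AJ m d p J ω =
        (1 : Matrix (Fin (m + 1)) (Fin (m + 1)) ℝ) - AJ m d p J 1) ∧
    (∀ a b, 0 ≤ ((1 : Matrix (Fin (m + 1)) (Fin (m + 1)) ℝ) - AJ m d p J 1) a b) ∧
    ((1 : Matrix (Fin (m + 1)) (Fin (m + 1)) ℝ) - AJ m d p J 1).mulVec
      (fun _ => (1 : ℝ)) = (fun _ => (1 : ℝ)) ∧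
    Matrix.vecMul p ((1 : Matrix (Fin (m + 1)) (Fin (m + 1)) ℝ) - AJ m d p J 1) = p ∧
    (∀ u : Fin d,
      ((1 : Matrix (Fin (m + 1)) (Fin (m + 1)) ℝ) - AJ m d p J 1) (Fin.last m)
          (J u).castSucc = r m p (J u) / (1 + ∑ w, r m p (J w))) ∧
    ((1 : Matrix (Fin (m + 1)) (Fin (m + 1)) ℝ) - AJ m d p J 1) (Fin.last m) (Fin.last m) =
      1 / (1 + ∑ w, r m p (J w)) := by
  have hplast : 0 < p (Fin.last m) := hp _
  have hr : ∀ j : Fin m, 0 < r m p j := fun j => div_pos (hp _) hplast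
  have hS0 : 0 < ∑ w, r m p (J w) :=
    Finset.sum_pos (fun w _ => hr _) ⟨⟨0, hd⟩, Finset.mem_univ _⟩
  have h1S : (0:ℝ) < 1 + ∑ w, r m p (J w) := by linarith
  have h1S' : (1 + ∑ w, r m p (J w)) ≠ 0 := ne_of_gt h1S
  -- sum of the "column factor" over b is zero
  have hg_sum : ∀ v : Fin d, ∑ b : Fin (m+1),
      ((if b = (J v).castSucc then (1:ℝ) else 0) - (if b = Fin.last m then 1 else 0)) = 0 := by
    intro v; rw [Finset.sum_sub_distrib]; simp
  -- p-weighted sum of the "row factor" over a is zero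
  have hf_psum : ∀ u : Fin d, ∑ a : Fin (m+1), p a *
      ((if a = (J u).castSucc then (1:ℝ) else 0) -
        r m p (J u) * (if a = Fin.last m then 1 else 0)) = 0 := by
    intro u
    have : ∀ a : Fin (m+1), p a *
        ((if a = (J u).castSucc then (1:ℝ) else 0) -
          r m p (J u) * (if a = Fin.last m then 1 else 0)) =
        (if a = (J u).castSucc then p a else 0) -
          r m p (J u) * (if a = Fin.last m then p a else 0) := by
      intro a; split_ifs <;> ring
    rw [Finset.sum_congr rfl fun a _ => this a, Finset.sum_sub_distrib]
    simp [r, div_mul_cancel₀, hplast.ne', ← Finset.mul_sum]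
  -- key scalar sums
  have key1 : ∀ u : Fin d, ∑ v,
      ((if J u = J v then (1:ℝ) else 0) - r m p (J v) / (1 + ∑ w, r m p (J w))) =
      1 / (1 + ∑ w, r m p (J w)) := by
    intro u
    rw [Finset.sum_sub_distrib]
    have h1 : ∑ v, (if J u = J v then (1:ℝ) else 0) = 1 := by
      simp [hJ.eq_iff]
    rw [h1, ← Finset.sum_div]
    field_simp
    ring
  have key2 : ∀ x : Fin d, ∑ u, r m p (J u) *
      ((if J u = J x then (1:ℝ) else 0) - r m p (J x) / (1 + ∑ w, r m p (J w))) =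
      r m p (J x) / (1 + ∑ w, r m p (J w)) := by
    intro x
    have : ∀ u : Fin d, r m p (J u) *
        ((if J u = J x then (1:ℝ) else 0) - r m p (J x) / (1 + ∑ w, r m p (J w))) =
        (if u = x then r m p (J u) else 0) -
          r m p (J u) * (r m p (J x) / (1 + ∑ w, r m p (J w))) := by
      intro u
      by_cases h : u = x
      · subst h; rw [if_pos rfl, if_pos rfl]; ring
      · rw [if_neg (fun hh => h (hJ hh)), if_neg h]; ring
    rw [Finset.sum_congr rfl fun u _ => this u, Finset.sum_sub_distrib, ← Finset.sum_mul]
    simp only [Finset.sum_ite_eq', Finset.mem_univ, if_true]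
    field_simp
    ring
  -- entries of A on rows indexed by J w
  have hAcast : ∀ (w : Fin d) (b : Fin (m+1)),
      AJ m d p J 1 ((J w).castSucc) b = ∑ v,
        ((if J w = J v then (1:ℝ) else 0) - r m p (J v) / (1 + ∑ w, r m p (J w))) *
          ((if b = (J v).castSucc then (1:ℝ) else 0) - (if b = Fin.last m then 1 else 0)) := by
    intro w b
    rw [hA_apply]
    rw [Finset.sum_eq_single w]
    · refine Finset.sum_congr rfl fun v _ => ?_
      rw [if_pos rfl, if_neg (Fin.castSucc_lt_last _).ne]
      ring
    · intro u _ huw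
      refine Finset.sum_eq_zero fun v _ => ?_
      rw [if_neg (fun h => huw (hJ (Fin.castSucc_inj.mp h)).symm),
        if_neg (Fin.castSucc_lt_last _).ne]
      ring
    · simp
  -- entries of A on rows outside the range of J (other than the last row)
  have hAout : ∀ (j : Fin m), (∀ u, J u ≠ j) → ∀ b : Fin (m+1),
      AJ m d p J 1 (j.castSucc) b = 0 := by
    intro j hj b
    rw [hA_apply]
    refine Finset.sum_eq_zero fun u _ => Finset.sum_eq_zero fun v _ => ?_
    rw [if_neg (fun h => hj u (Fin.castSucc_inj.mp h).symm),
      if_neg (Fin.castSucc_lt_last _).ne]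
    ring
  -- entries of A on the last row
  have hAlast : ∀ b : Fin (m+1), AJ m d p J 1 (Fin.last m) b =
      ∑ u, (-(r m p (J u))) * ∑ v,
        ((if J u = J v then (1:ℝ) else 0) - r m p (J v) / (1 + ∑ w, r m p (J w))) *
          ((if b = (J v).castSucc then (1:ℝ) else 0) - (if b = Fin.last m then 1 else 0)) := by
    intro b
    rw [hA_apply]
    refine Finset.sum_congr rfl fun u _ => ?_
    rw [Finset.mul_sum]
    refine Finset.sum_congr rfl fun v _ => ?_
    rw [if_neg (Fin.castSucc_lt_last _).ne.symm, if_pos rfl]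
    ring
  -- collapse of the column factor at b = (J x).castSucc
  have hgcol : ∀ (x c : Fin d),
      ((if (J x).castSucc = (J c).castSucc then (1:ℝ) else 0) -
        (if (J x).castSucc = Fin.last m then 1 else 0)) = if c = x then 1 else 0 := by
    intro x c
    rw [if_neg (Fin.castSucc_lt_last _).ne]
    simp [Fin.castSucc_inj, hJ.eq_iff, eq_comm]
  -- value of A at (row in J-or-last, col = (J x).castSucc) etc.
  have hA_cast_cast : ∀ (w x : Fin d),
      AJ m d p J 1 ((J w).castSucc) ((J x).castSucc) =
        (if w = x then (1:ℝ) else 0) - r m p (J x) / (1 + ∑ w, r m p (J w)) := by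
    intro w x
    rw [hAcast]
    have : ∀ v : Fin d,
        ((if J w = J v then (1:ℝ) else 0) - r m p (J v) / (1 + ∑ w, r m p (J w))) *
          ((if (J x).castSucc = (J v).castSucc then (1:ℝ) else 0) -
            (if (J x).castSucc = Fin.last m then 1 else 0)) =
        if v = x then ((if J w = J v then (1:ℝ) else 0) -
          r m p (J v) / (1 + ∑ w, r m p (J w))) else 0 := by
      intro v; rw [hgcol x v]; split_ifs <;> ring
    rw [Finset.sum_congr rfl fun v _ => this v, Finset.sum_ite_eq' Finset.univ x]
    simp only [Finset.mem_univ, if_true]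
    by_cases hwx : w = x
    · subst hwx; rw [if_pos rfl, if_pos rfl]
    · rw [if_neg (fun h => hwx (hJ h)), if_neg hwx]
  have hA_cast_last : ∀ w : Fin d,
      AJ m d p J 1 ((J w).castSucc) (Fin.last m) = -(1 / (1 + ∑ w, r m p (J w))) := by
    intro w
    rw [hAcast]
    have : ∀ v : Fin d,
        ((if J w = J v then (1:ℝ) else 0) - r m p (J v) / (1 + ∑ w, r m p (J w))) *
          ((if Fin.last m = (J v).castSucc then (1:ℝ) else 0) -
            (if Fin.last m = Fin.last m then 1 else 0)) =
        -((if J w = J v then (1:ℝ) else 0) - r m p (J v) / (1 + ∑ w, r m p (J w))) := by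
      intro v
      rw [if_neg (Fin.castSucc_lt_last _).ne.symm, if_pos rfl]
      ring
    rw [Finset.sum_congr rfl fun v _ => this v, Finset.sum_neg_distrib, key1]
  have hA_cast_out : ∀ (w : Fin d) (k : Fin m), (∀ v, J v ≠ k) →
      AJ m d p J 1 ((J w).castSucc) (k.castSucc) = 0 := by
    intro w k hk
    rw [hAcast]
    refine Finset.sum_eq_zero fun v _ => ?_
    rw [if_neg (fun h => hk v (Fin.castSucc_inj.mp h).symm),
      if_neg (Fin.castSucc_lt_last _).ne]
    ring
  have hA_last_cast : ∀ x : Fin d,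
      AJ m d p J 1 (Fin.last m) ((J x).castSucc) =
        -(r m p (J x) / (1 + ∑ w, r m p (J w))) := by
    intro x
    rw [hAlast]
    have : ∀ u : Fin d, (-(r m p (J u))) * ∑ v,
        ((if J u = J v then (1:ℝ) else 0) - r m p (J v) / (1 + ∑ w, r m p (J w))) *
          ((if (J x).castSucc = (J v).castSucc then (1:ℝ) else 0) -
            (if (J x).castSucc = Fin.last m then 1 else 0)) =
        -(r m p (J u) * ((if J u = J x then (1:ℝ) else 0) -
          r m p (J x) / (1 + ∑ w, r m p (J w)))) := by
      intro u
      have h2 : ∀ v : Fin d,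
          ((if J u = J v then (1:ℝ) else 0) - r m p (J v) / (1 + ∑ w, r m p (J w))) *
            ((if (J x).castSucc = (J v).castSucc then (1:ℝ) else 0) -
              (if (J x).castSucc = Fin.last m then 1 else 0)) =
          if v = x then ((if J u = J v then (1:ℝ) else 0) -
            r m p (J v) / (1 + ∑ w, r m p (J w))) else 0 := by
        intro v; rw [hgcol x v]; split_ifs <;> ring
      rw [Finset.sum_congr rfl fun v _ => h2 v, Finset.sum_ite_eq' Finset.univ x]
      simp only [Finset.mem_univ, if_true]
      ring
    rw [Finset.sum_congr rfl fun u _ => this u, Finset.sum_neg_distrib, key2]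
  have hA_last_last :
      AJ m d p J 1 (Fin.last m) (Fin.last m) =
        (∑ w, r m p (J w)) / (1 + ∑ w, r m p (J w)) := by
    rw [hAlast]
    have : ∀ u : Fin d, (-(r m p (J u))) * ∑ v,
        ((if J u = J v then (1:ℝ) else 0) - r m p (J v) / (1 + ∑ w, r m p (J w))) *
          ((if Fin.last m = (J v).castSucc then (1:ℝ) else 0) -
            (if Fin.last m = Fin.last m then 1 else 0)) =
        r m p (J u) * (1 / (1 + ∑ w, r m p (J w))) := by
      intro u
      have h2 : ∀ v : Fin d,
          ((if J u = J v then (1:ℝ) else 0) - r m p (J v) / (1 + ∑ w, r m p (J w))) *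
            ((if Fin.last m = (J v).castSucc then (1:ℝ) else 0) -
              (if Fin.last m = Fin.last m then 1 else 0)) =
          -((if J u = J v then (1:ℝ) else 0) - r m p (J v) / (1 + ∑ w, r m p (J w))) := by
        intro v
        rw [if_neg (Fin.castSucc_lt_last _).ne.symm, if_pos rfl]
        ring
      rw [Finset.sum_congr rfl fun v _ => h2 v, Finset.sum_neg_distrib, key1]
      ring
    rw [Finset.sum_congr rfl fun u _ => this u, ← Finset.sum_mul]
    field_simp
  have hA_last_out : ∀ k : Fin m, (∀ v, J v ≠ k) →
      AJ m d p J 1 (Fin.last m) (k.castSucc) = 0 := by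
    intro k hk
    rw [hAlast]
    refine Finset.sum_eq_zero fun u _ => ?_
    rw [Finset.sum_eq_zero, mul_zero]
    intro v _
    rw [if_neg (fun h => hk v (Fin.castSucc_inj.mp h).symm),
      if_neg (Fin.castSucc_lt_last _).ne]
    ring
  -- row sums of A are zero
  have hArowsum : ∀ a, ∑ b, AJ m d p J 1 a b = 0 := by
    intro a
    rw [Finset.sum_congr rfl fun b _ => hA_apply m d p J a b, Finset.sum_comm]
    refine Finset.sum_eq_zero fun u _ => ?_
    rw [Finset.sum_comm]
    refine Finset.sum_eq_zero fun v _ => ?_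
    rw [← Finset.mul_sum, ← Finset.mul_sum, hg_sum, mul_zero, mul_zero]
  -- p-weighted column sums of A are zero
  have hAcolsum : ∀ b, ∑ a, p a * AJ m d p J 1 a b = 0 := by
    intro b
    have swap : ∀ a : Fin (m+1), p a * AJ m d p J 1 a b = ∑ u, ∑ v,
        p a * (((if J u = J v then (1:ℝ) else 0) - r m p (J v) / (1 + ∑ w, r m p (J w))) *
          (((if a = (J u).castSucc then (1:ℝ) else 0) -
              r m p (J u) * (if a = Fin.last m then 1 else 0)) *
            ((if b = (J v).castSucc then (1:ℝ) else 0) -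
              (if b = Fin.last m then 1 else 0)))) := by
      intro a
      rw [hA_apply m d p J a b, Finset.mul_sum]
      exact Finset.sum_congr rfl fun u _ => Finset.mul_sum _ _ _
    rw [Finset.sum_congr rfl fun a _ => swap a, Finset.sum_comm]
    refine Finset.sum_eq_zero fun u _ => ?_
    rw [Finset.sum_comm]
    refine Finset.sum_eq_zero fun v _ => ?_
    have : ∀ a : Fin (m+1), p a *
        (((if J u = J v then (1:ℝ) else 0) - r m p (J v) / (1 + ∑ w, r m p (J w))) *
          (((if a = (J u).castSucc then (1:ℝ) else 0) -
              r m p (J u) * (if a = Fin.last m then 1 else 0)) *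
            ((if b = (J v).castSucc then (1:ℝ) else 0) -
              (if b = Fin.last m then 1 else 0)))) =
        ((if J u = J v then (1:ℝ) else 0) - r m p (J v) / (1 + ∑ w, r m p (J w))) *
          ((if b = (J v).castSucc then (1:ℝ) else 0) -
            (if b = Fin.last m then 1 else 0)) *
          (p a * ((if a = (J u).castSucc then (1:ℝ) else 0) -
            r m p (J u) * (if a = Fin.last m then 1 else 0))) := by
      intro a; ring
    rw [Finset.sum_congr rfl fun a _ => this a, ← Finset.mul_sum, hf_psum, mul_zero]
  refine ⟨?_, ?_, ?_, ?_, ?_, ?_⟩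
  · intro ω hω
    simp [AJ, smul_smul, inv_mul_cancel₀ hω]
  · intro a b
    simp only [Matrix.sub_apply, Matrix.one_apply, sub_nonneg]
    induction a using Fin.lastCases with
    | last =>
      induction b using Fin.lastCases with
      | last =>
        rw [hA_last_last, if_pos rfl]
        rw [div_le_one h1S]
        linarith
      | cast k =>
        by_cases hk : ∃ v, J v = k
        · obtain ⟨x, rfl⟩ := hk
          rw [hA_last_cast, if_neg (Fin.castSucc_lt_last _).ne.symm]
          exact neg_nonpos.mpr (div_nonneg (hr _).le h1S.le)
        · push_neg at hk
          rw [hA_last_out k hk, if_neg (Fin.castSucc_lt_last _).ne.symm]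
    | cast j =>
      by_cases hjr : ∃ w, J w = j
      · obtain ⟨w, rfl⟩ := hjr
        induction b using Fin.lastCases with
        | last =>
          rw [hA_cast_last, if_neg (Fin.castSucc_lt_last _).ne]
          exact neg_nonpos.mpr (div_nonneg zero_le_one h1S.le)
        | cast k =>
          by_cases hk : ∃ v, J v = k
          · obtain ⟨x, rfl⟩ := hk
            rw [hA_cast_cast]
            have h1 : ((J w).castSucc = (J x).castSucc) ↔ (w = x) := by
              simp [Fin.castSucc_inj, hJ.eq_iff]
            have h2 : (0:ℝ) ≤ r m p (J x) / (1 + ∑ w, r m p (J w)) :=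
              div_nonneg (hr _).le h1S.le
            by_cases hwx : w = x
            · rw [if_pos (h1.mpr hwx), if_pos hwx]; linarith
            · rw [if_neg (fun h => hwx (h1.mp h)), if_neg hwx]; linarith
          · push_neg at hk
            rw [hA_cast_out w k hk]
            split_ifs <;> norm_num
      · push_neg at hjr
        rw [hAout j hjr]
        split_ifs <;> norm_num
  · funext a
    simp only [Matrix.mulVec, dotProduct, Matrix.sub_apply, Matrix.one_apply, mul_one,
      Finset.sum_sub_distrib, hArowsum, sub_zero]
    simp
  · funext b
    simp only [Matrix.vecMul, dotProduct, Matrix.sub_apply, Matrix.one_apply, mul_sub,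
      Finset.sum_sub_distrib, hAcolsum, sub_zero]
    simp [mul_ite]
  · intro u
    rw [Matrix.sub_apply, Matrix.one_apply,
      if_neg (Fin.castSucc_lt_last _).ne.symm, hA_last_cast]
    ring
  · rw [Matrix.sub_apply, Matrix.one_apply, if_pos rfl, hA_last_last]
    field_simp
    ring
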